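/- Let ε ∈ (0, 1/(10n²)). Then there do not exist n+1 vectors ν₁, …, ν_{n+1} in ℝⁿ such that |⟨ν_i, ν_j⟩| ≤ ε for all i ≠ j and ||ν_i| − 1| ≤ ε for all i. -/

import Mathlib

open RealInnerProductSpace

/-- If `0 < ε < 1/(10 n²)`, there do not exist `n+1` vectors in `ℝⁿ`
which are pairwise almost orthogonal (`|⟨νᵢ, νⱼ⟩| ≤ ε` for `i ≠ j`) and almost unit
(`||νᵢ| − 1| ≤ ε`). -/
theorem no_n_plus_one_almost_orthonormal_vectors (n : ℕ) (ε : ℝ)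
    (hε0 : 0 < ε) (hε : ε < 1 / (10 * (n : ℝ) ^ 2)) :
    ¬ ∃ ν : Fin (n + 1) → EuclideanSpace ℝ (Fin n),
        (∀ i j : Fin (n + 1), i ≠ j → abs (inner ℝ (ν i) (ν j) : ℝ) ≤ ε) ∧
        (∀ i : Fin (n + 1), |‖ν i‖ - 1| ≤ ε) := by
  rintro ⟨ν, horth, hunit⟩
  rcases Nat.eq_zero_or_pos n with hn | hn
  · subst hn; norm_num at hε; linarith
  have hn1 : (1 : ℝ) ≤ n := by exact_mod_cast hn
  have hε10 : ε < 1 / 10 := by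
    have : 1 / (10 * (n : ℝ) ^ 2) ≤ 1 / 10 := by
      apply one_div_le_one_div_of_le <;> nlinarith
    linarith
  have hnε : (n : ℝ) * ε < 1 / 10 := by
    have h1 : (n : ℝ) * ε < (n : ℝ) * (1 / (10 * (n : ℝ) ^ 2)) := by
      apply mul_lt_mul_of_pos_left hε; linarith
    have h2 : (n : ℝ) * (1 / (10 * (n : ℝ) ^ 2)) = 1 / (10 * n) := by
      field_simp
    have h3 : 1 / (10 * (n : ℝ)) ≤ 1 / 10 := by
      apply one_div_le_one_div_of_le <;> nlinarith
    linarith [h1, h2 ▸ h1]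
  have hdep : ¬ LinearIndependent ℝ ν := by
    intro h
    have hc := LinearIndependent.fintype_card_le_finrank h
    simp [finrank_euclideanSpace_fin] at hc
  obtain ⟨g, hsum, i₀, hi₀⟩ := Fintype.not_linearIndependent_iff.mp hdep
  obtain ⟨i, -, hi⟩ := Finset.exists_max_image Finset.univ (fun j => |g j|)
    ⟨i₀, Finset.mem_univ _⟩
  have hgi : 0 < |g i| :=
    lt_of_lt_of_le (abs_pos.mpr hi₀) (hi i₀ (Finset.mem_univ _))
  have h0 : (inner ℝ (∑ j, g j • ν j) (ν i) : ℝ) = 0 := by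
    rw [hsum]; simp
  rw [sum_inner] at h0
  simp only [real_inner_smul_left] at h0
  have hsplit : ∑ j ∈ Finset.univ.erase i, g j * (inner ℝ (ν j) (ν i) : ℝ)
      + g i * (inner ℝ (ν i) (ν i) : ℝ) = 0 := by
    rw [Finset.sum_erase_add Finset.univ _ (Finset.mem_univ i)]; exact h0
  have key : |g i| * ‖ν i‖ ^ 2 ≤ (n : ℝ) * (|g i| * ε) := by
    have h1 : |g i| * ‖ν i‖ ^ 2 = |∑ j ∈ Finset.univ.erase i, g j * (inner ℝ (ν j) (ν i) : ℝ)| := by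
      have heq : g i * (inner ℝ (ν i) (ν i) : ℝ)
          = -(∑ j ∈ Finset.univ.erase i, g j * (inner ℝ (ν j) (ν i) : ℝ)) := by linarith
      rw [real_inner_self_eq_norm_sq] at heq
      calc |g i| * ‖ν i‖ ^ 2 = |g i * ‖ν i‖ ^ 2| := by
            rw [abs_mul, abs_of_nonneg (by positivity : (0:ℝ) ≤ ‖ν i‖ ^ 2)]
        _ = _ := by rw [heq, abs_neg]
    rw [h1]
    calc |∑ j ∈ Finset.univ.erase i, g j * (inner ℝ (ν j) (ν i) : ℝ)|
        ≤ ∑ j ∈ Finset.univ.erase i, |g j * (inner ℝ (ν j) (ν i) : ℝ)| :=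
          Finset.abs_sum_le_sum_abs _ _
      _ ≤ ∑ j ∈ Finset.univ.erase i, |g i| * ε := by
          apply Finset.sum_le_sum
          intro j hj
          rw [abs_mul]
          exact mul_le_mul (hi j (Finset.mem_univ _))
            (horth j i (Finset.ne_of_mem_erase hj)) (abs_nonneg _) (abs_nonneg _)
      _ = ((Finset.univ.erase i).card : ℝ) * (|g i| * ε) := by
          rw [Finset.sum_const, nsmul_eq_mul]
      _ ≤ (n : ℝ) * (|g i| * ε) := by
          apply mul_le_mul_of_nonneg_right _ (by positivity)
          have hcard : (Finset.univ.erase i).card = n := by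
            simp [Finset.card_erase_of_mem]
          rw [hcard]
  have hsq : ‖ν i‖ ^ 2 ≤ (n : ℝ) * ε := by
    nlinarith [key, hgi]
  have hni : 9 / 10 ≤ ‖ν i‖ := by
    have := hunit i
    rw [abs_le] at this
    linarith
  nlinarith [hsq, hni, hnε]
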